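/- Let u_1,…,u_m ∈ S = K[x_1,…,x_n] be nonconstant monomials with pairwise disjoint supports and let I = (u_1,…,u_m) be the monomial complete intersection they generate (so μ(I) = m). Then for every k ≥ 1, v(I^k) = α(I)·k + ( ∑_{i=1}^m deg(u_i) − α(I) − m ), where α(I) = min_{1≤i≤m} deg(u_i). -/

import Mathlib

open MvPolynomial

noncomputable section

/-- The set of associated primes `Ass(L)` of the quotient by an ideal `L`. -/
def assOf {A : Type} [CommRing A] (L : Ideal A) : Set (Ideal A) :=
  associatedPrimes A (A ⧸ L)

/-- `𝔄` is the stable value `Ass^∞(L)` of `Ass(L^k)` for all large `k`. -/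
def IsStableAssValue {A : Type} [CommRing A] (L : Ideal A) (𝔄 : Set (Ideal A)) : Prop :=
  ∃ N : ℕ, ∀ k : ℕ, N ≤ k → assOf (L ^ k) = 𝔄

/-- `Ass^*(L) = ⋃_{k ≥ 1} Ass(L^k)`. -/
def assStar {A : Type} [CommRing A] (L : Ideal A) : Set (Ideal A) :=
  {p | ∃ k : ℕ, 1 ≤ k ∧ p ∈ assOf (L ^ k)}

/-- The local v-number `v_p(L)`: the least degree of a homogeneous `f` with `(L : f) = p`. -/
def vnum {σ K : Type} [Field K] (L p : Ideal (MvPolynomial σ K)) : ℕ :=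
  sInf {d : ℕ | ∃ f : MvPolynomial σ K, f.IsHomogeneous d ∧ L.colon (Ideal.span {f}) = p}

/-- The v-number `v(L) = min_{p ∈ Ass(L)} v_p(L)`. -/
def vnumber {σ K : Type} [Field K] (L : Ideal (MvPolynomial σ K)) : ℕ :=
  sInf {d : ℕ | ∃ p ∈ assOf L, ∃ f : MvPolynomial σ K,
    f.IsHomogeneous d ∧ L.colon (Ideal.span {f}) = p}

/-- The initial degree `α(L)`: the least `d` such that `L` contains a nonzero
homogeneous element of degree `d`. -/
def alphaDeg {σ K : Type} [Field K] (L : Ideal (MvPolynomial σ K)) : ℕ :=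
  sInf {d : ℕ | ∃ f ∈ L, f ≠ 0 ∧ MvPolynomial.IsHomogeneous f d}

/-- A graded (homogeneous) ideal: one containing all homogeneous components
of each of its elements. -/
def IsGradedIdeal {σ K : Type} [Field K] (I : Ideal (MvPolynomial σ K)) : Prop :=
  ∀ f ∈ I, ∀ d : ℕ, homogeneousComponent d f ∈ I

/-- A monomial ideal: an ideal generated by monomials. -/
def IsMonomialIdeal {σ K : Type} [Field K] (I : Ideal (MvPolynomial σ K)) : Prop :=
  ∃ G : Set (σ →₀ ℕ), I = Ideal.span ((fun a => (monomial a (1 : K))) '' G)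

namespace Stmt14Aux

variable {K : Type} [Field K] {n : ℕ}

/-- membership direction: every monomial of an element of a monomial span is divisible
by a generator exponent. -/
theorem exists_le_of_coeff_ne_zero {G : Set (Fin n →₀ ℕ)} {f : MvPolynomial (Fin n) K}
    (hf : f ∈ Ideal.span ((fun g => monomial g (1 : K)) '' G))
    {c : Fin n →₀ ℕ} (hc : f.coeff c ≠ 0) : ∃ g ∈ G, g ≤ c := by
  classical
  induction hf using Submodule.span_induction generalizing c with
  | mem x hx =>
    obtain ⟨g, hg, rfl⟩ := hx
    rw [coeff_monomial] at hc
    split_ifs at hc with h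
    · exact ⟨g, hg, le_of_eq h⟩
    · exact absurd rfl hc
  | zero => simp at hc
  | add x y hx hy ihx ihy =>
    rw [coeff_add] at hc
    rcases (by by_contra hcon; push_neg at hcon; simp [hcon.1, hcon.2] at hc :
        coeff c x ≠ 0 ∨ coeff c y ≠ 0) with h | h
    · exact ihx h
    · exact ihy h
  | smul r x hx ih =>
    rw [smul_eq_mul, coeff_mul] at hc
    obtain ⟨⟨c1, c2⟩, hmem, hne⟩ := Finset.exists_ne_zero_of_sum_ne_zero hc
    obtain ⟨g, hg, hle⟩ := ih (c := c2) (fun h => hne (by simp [h]))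
    refine ⟨g, hg, hle.trans ?_⟩
    rw [Finset.HasAntidiagonal.mem_antidiagonal] at hmem
    exact hmem ▸ le_add_self

theorem monomial_mem_span_of_le {G : Set (Fin n →₀ ℕ)} {g c : Fin n →₀ ℕ} (hg : g ∈ G)
    (hle : g ≤ c) (r : K) :
    monomial c r ∈ Ideal.span ((fun g => monomial g (1 : K)) '' G) := by
  have : monomial c r = monomial (c - g) r * monomial g 1 := by
    rw [monomial_mul, mul_one, tsub_add_cancel_of_le hle]
  rw [this]
  exact Ideal.mul_mem_left _ _ (Ideal.subset_span ⟨g, hg, rfl⟩)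

/-- an element of a monomial span, all of whose monomials are... conversely:
if every monomial term of `f` is in an ideal, then `f` is. -/
theorem mem_of_terms_mem {J : Ideal (MvPolynomial (Fin n) K)} {f : MvPolynomial (Fin n) K}
    (h : ∀ c ∈ f.support, monomial c (f.coeff c) ∈ J) : f ∈ J := by
  rw [f.as_sum]
  exact Ideal.sum_mem _ h



/-- the exponents of the monomial generators of `I^k` -/
def expSet (a : Fin m → (Fin n →₀ ℕ)) (k : ℕ) : Set (Fin n →₀ ℕ) :=
  {e | ∃ b : Fin m → ℕ, (∑ i, b i) = k ∧ e = ∑ i, b i • a i}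

theorem sum_single_smul (a : Fin m → (Fin n →₀ ℕ)) (b : Fin m → ℕ) (i : Fin m) :
    ∑ t, ((b + Pi.single i 1 : Fin m → ℕ) t) • a t = (∑ t, b t • a t) + a i := by
  classical
  simp only [Pi.add_apply, add_smul, Finset.sum_add_distrib]
  congr 1
  rw [Finset.sum_eq_single i]
  · simp
  · intro t _ ht; simp [Pi.single_eq_of_ne ht]
  · simp

theorem exists_split {b : Fin m → ℕ} {i : Fin m} (hi : b i ≠ 0) :
    ∃ b' : Fin m → ℕ, b = b' + Pi.single i 1 := by
  classical
  refine ⟨Function.update b i (b i - 1), funext fun t => ?_⟩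
  by_cases ht : t = i
  · subst ht; simp [Function.update_self]; omega
  · simp [Function.update_of_ne ht, Pi.single_eq_of_ne ht]

theorem span_pow (a : Fin m → (Fin n →₀ ℕ)) (k : ℕ) :
    (Ideal.span (Set.range fun i => (monomial (a i) (1 : K)))) ^ k
      = Ideal.span ((fun g => monomial g (1 : K)) '' expSet a k) := by
  classical
  induction k with
  | zero =>
    have h0 : expSet a 0 = {0} := by
      ext e
      constructor
      · rintro ⟨b, hb, rfl⟩
        have hz : ∀ i ∈ Finset.univ, b i = 0 := Finset.sum_eq_zero_iff.mp hb
        simp only [Set.mem_singleton_iff]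
        rw [Finset.sum_congr rfl (fun i hi => by rw [hz i hi, zero_smul])]
        simp
      · rintro rfl
        exact ⟨0, by simp, by simp⟩
    rw [pow_zero, h0]
    simp only [Set.image_singleton, monomial_zero', C_1]
    rw [Ideal.span_singleton_one, Ideal.one_eq_top]
  | succ k ih =>
    rw [pow_succ, ih, Ideal.span_mul_span']
    congr 1
    ext f
    constructor
    · rintro ⟨x, ⟨e, ⟨b, hb, rfl⟩, rfl⟩, y, ⟨i, rfl⟩, rfl⟩
      refine ⟨(∑ t, b t • a t) + a i, ⟨b + Pi.single i 1, ?_, (sum_single_smul a b i).symm⟩, ?_⟩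
      · simp [Finset.sum_add_distrib, hb, Finset.sum_pi_single']
      · simp [monomial_mul]
    · rintro ⟨e, ⟨b, hb, rfl⟩, rfl⟩
      have hpos : ∃ i, b i ≠ 0 := by
        by_contra hcon
        push_neg at hcon
        simp [hcon] at hb
      obtain ⟨i, hi⟩ := hpos
      obtain ⟨b', rfl⟩ := exists_split hi
      have hsum : ∑ t, b' t = k := by
        have := hb
        simp [Finset.sum_add_distrib, Finset.sum_pi_single'] at this
        omega
      refine ⟨monomial (∑ t, b' t • a t) 1, ⟨_, ⟨b', hsum, rfl⟩, rfl⟩,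
        monomial (a i) 1, ⟨i, rfl⟩, ?_⟩
      dsimp only
      rw [monomial_mul, one_mul, sum_single_smul]



theorem shrink : ∀ (d k : ℕ) (b : Fin m → ℕ), (∑ i, b i) = k + d →
    ∃ b' : Fin m → ℕ, b' ≤ b ∧ (∑ i, b' i) = k := by
  intro d
  induction d with
  | zero => exact fun k b hb => ⟨b, le_rfl, hb⟩
  | succ d ih =>
    intro k b hb
    have hpos : ∃ i, b i ≠ 0 := by
      by_contra hcon
      push_neg at hcon
      simp [hcon] at hb
    obtain ⟨i, hi⟩ := hpos
    classical
    set b2 : Fin m → ℕ := Function.update b i (b i - 1) with hb2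
    have h1 : ∑ t, b2 t = (b i - 1) + ∑ t ∈ Finset.univ \ {i}, b t :=
      Finset.sum_update_of_mem (Finset.mem_univ i) b (b i - 1)
    have h2 : ∑ t, b t = b i + ∑ t ∈ Finset.univ \ {i}, b t := by
      rw [Finset.sdiff_singleton_eq_erase]
      exact (Finset.add_sum_erase _ b (Finset.mem_univ i)).symm
    have hsum2 : (∑ t, b2 t) = k + d := by omega
    obtain ⟨b', hle, hsum⟩ := ih k b2 hsum2
    refine ⟨b', le_trans hle (fun t => ?_), hsum⟩
    by_cases ht : t = i
    · subst ht; simp [hb2, Function.update_self]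
    · simp [hb2, Function.update_of_ne ht]

/-- membership criterion for a monomial in `I^k` -/
theorem monomial_mem_pow_iff (a : Fin m → (Fin n →₀ ℕ)) (k : ℕ) (c : Fin n →₀ ℕ)
    {r : K} (hr : r ≠ 0) :
    monomial c r ∈ (Ideal.span (Set.range fun i => (monomial (a i) (1 : K)))) ^ k ↔
      ∃ b : Fin m → ℕ, k ≤ (∑ i, b i) ∧ (∑ i, b i • a i) ≤ c := by
  rw [span_pow]
  constructor
  · intro h
    have hc : (monomial c r).coeff c ≠ 0 := by simp [coeff_monomial, hr]
    obtain ⟨g, ⟨b, hb, rfl⟩, hle⟩ := exists_le_of_coeff_ne_zero h hc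
    exact ⟨b, le_of_eq hb.symm, hle⟩
  · rintro ⟨b, hb, hle⟩
    obtain ⟨d, hd⟩ := Nat.exists_eq_add_of_le hb
    obtain ⟨b', hble, hbsum⟩ := shrink d k b hd
    refine monomial_mem_span_of_le (G := expSet a k) ⟨b', hbsum, rfl⟩ (le_trans ?_ hle) r
    exact Finset.sum_le_sum fun i _ => smul_le_smul_of_nonneg_right (hble i) zero_le


/-- exponents of the variables indexed by a finset -/
def varExp (T : Finset (Fin n)) : Set (Fin n →₀ ℕ) :=
  (fun j => Finsupp.single j 1) '' (T : Set (Fin n))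

/-- the prime ideal generated by the variables indexed by `T` -/
def pIdeal (K : Type) [Field K] {n : ℕ} (T : Finset (Fin n)) : Ideal (MvPolynomial (Fin n) K) :=
  Ideal.span ((fun g => monomial g (1 : K)) '' varExp T)

theorem X_mem_pIdeal {T : Finset (Fin n)} {j : Fin n} (hj : j ∈ T) :
    (X j : MvPolynomial (Fin n) K) ∈ pIdeal K T := by
  have hX : (X j : MvPolynomial (Fin n) K) = monomial (Finsupp.single j 1) 1 := by
    rw [← X_pow_eq_monomial, pow_one]
  rw [hX]
  exact Ideal.subset_span ⟨Finsupp.single j 1, ⟨j, hj, rfl⟩, rfl⟩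

section
variable (K) (T : Finset (Fin n))

/-- the substitution sending the variables of `T` to zero. -/
def killT : MvPolynomial (Fin n) K →ₐ[K] MvPolynomial (Fin n) K :=
  aeval (fun j => if j ∈ T then 0 else X j)

theorem killT_monomial_of_disj (c : Fin n →₀ ℕ) (r : K) (h : ∀ j ∈ T, c j = 0) :
    killT K T (monomial c r) = monomial c r := by
  rw [killT, aeval_monomial, algebraMap_eq]
  have : (c.prod fun i k => (if i ∈ T then 0 else (X i : MvPolynomial (Fin n) K)) ^ k) = c.prod fun i k => (X i) ^ k := by
    apply Finsupp.prod_congr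
    intro j hj
    have : j ∉ T := fun hjT => by
      simp [Finsupp.mem_support_iff, h j hjT] at hj
    rw [if_neg this]
  rw [this, Finsupp.prod, prod_X_pow_eq_monomial, monomial_eq (a := r), Finsupp.prod,
    prod_X_pow_eq_monomial]

theorem killT_monomial_of_mem (c : Fin n →₀ ℕ) (r : K) {j : Fin n} (hj : j ∈ T) (hc : c j ≠ 0) :
    killT K T (monomial c r) = 0 := by
  rw [killT, aeval_monomial]
  have : (c.prod fun i k => (if i ∈ T then 0 else (X i : MvPolynomial (Fin n) K)) ^ k) = 0 := by
    rw [Finsupp.prod]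
    apply Finset.prod_eq_zero (Finsupp.mem_support_iff.mpr hc)
    rw [if_pos hj, zero_pow hc]
  rw [this, mul_zero]

theorem pIdeal_eq_ker : pIdeal K T = RingHom.ker (killT K T) := by
  apply le_antisymm
  · rw [pIdeal, Ideal.span_le]
    rintro x ⟨g, ⟨j, hj, rfl⟩, rfl⟩
    rw [SetLike.mem_coe, RingHom.mem_ker]
    show (killT K T) (monomial (Finsupp.single j 1) (1:K)) = 0
    have hX : (monomial (Finsupp.single j 1) (1 : K)) = X j := by
      rw [← X_pow_eq_monomial, pow_one]
    rw [hX, killT, aeval_X, if_pos (Finset.mem_coe.mp hj)]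
  · intro f hf
    rw [RingHom.mem_ker] at hf
    classical
    -- split f into terms touching T and not
    set s1 : Finset (Fin n →₀ ℕ) := f.support.filter (fun c => ∀ j ∈ T, c j = 0) with hs1
    set f1 : MvPolynomial (Fin n) K := ∑ c ∈ s1, monomial c (f.coeff c) with hf1
    set f2 : MvPolynomial (Fin n) K := ∑ c ∈ f.support \ s1, monomial c (f.coeff c) with hf2
    have hsplit : f = f1 + f2 := by
      rw [hf1, hf2, ← Finset.sum_union (Finset.disjoint_sdiff)]
      rw [Finset.union_sdiff_of_subset (Finset.filter_subset _ _)]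
      exact f.as_sum
    have hf2mem : f2 ∈ pIdeal K T := by
      apply Ideal.sum_mem
      intro c hc
      rw [Finset.mem_sdiff, hs1, Finset.mem_filter] at hc
      have : ∃ j ∈ T, c j ≠ 0 := by
        by_contra hcon
        push_neg at hcon
        exact hc.2 ⟨hc.1, hcon⟩
      obtain ⟨j, hjT, hcj⟩ := this
      exact monomial_mem_span_of_le (G := varExp T) ⟨j, hjT, rfl⟩ (Finsupp.single_le_iff.mpr (Nat.one_le_iff_ne_zero.mpr hcj)) _
    have hk1 : killT K T f1 = f1 := by
      rw [hf1, map_sum]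
      apply Finset.sum_congr rfl
      intro c hc
      rw [hs1, Finset.mem_filter] at hc
      exact killT_monomial_of_disj K T c _ hc.2
    have hk2 : killT K T f2 = 0 := by
      rw [hf2, map_sum]
      apply Finset.sum_eq_zero
      intro c hc
      rw [Finset.mem_sdiff, hs1, Finset.mem_filter] at hc
      have : ∃ j ∈ T, c j ≠ 0 := by
        by_contra hcon
        push_neg at hcon
        exact hc.2 ⟨hc.1, hcon⟩
      obtain ⟨j, hjT, hcj⟩ := this
      exact killT_monomial_of_mem K T c _ hjT hcj
    have hf1z : f1 = 0 := by
      have := hf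
      rw [hsplit, map_add, hk1, hk2, add_zero] at this
      exact this
    rw [hsplit, hf1z, zero_add]
    exact hf2mem

theorem pIdeal_isPrime : (pIdeal K T).IsPrime := by
  rw [pIdeal_eq_ker]
  exact RingHom.ker_isPrime _

end

/-- if `g ∉ pIdeal`, some monomial of `g` avoids all variables of `T` -/
theorem exists_term_avoiding {T : Finset (Fin n)} {g : MvPolynomial (Fin n) K}
    (hg : g ∉ pIdeal K T) : ∃ c ∈ g.support, ∀ j ∈ T, c j = 0 := by
  by_contra hcon
  push_neg at hcon
  apply hg
  apply mem_of_terms_mem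
  intro c hc
  obtain ⟨j, hjT, hcj⟩ := hcon c hc
  exact monomial_mem_span_of_le (G := varExp T) ⟨j, hjT, rfl⟩
    (Finsupp.single_le_iff.mpr (Nat.one_le_iff_ne_zero.mpr hcj)) _


def dsum (a : Fin n →₀ ℕ) : ℕ := ∑ j, a j

theorem dsum_eq_degree (a : Fin n →₀ ℕ) : dsum a = a.degree := by
  rw [Finsupp.degree, dsum]
  exact (Finset.sum_subset (Finset.subset_univ _)
    (fun j _ hj => Finsupp.notMem_support_iff.mp hj)).symm

theorem dsum_eq_fsum (a : Fin n →₀ ℕ) : dsum a = a.sum fun _ e => e := by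
  rw [dsum_eq_degree, Finsupp.degree, Finsupp.sum]
  rfl

theorem isHomogeneous_monomial_dsum (c : Fin n →₀ ℕ) (r : K) :
    IsHomogeneous (monomial c r) (dsum c) :=
  isHomogeneous_monomial r (dsum_eq_degree c).symm

theorem colon_eq_annihilator (L : Ideal (MvPolynomial (Fin n) K)) (f : MvPolynomial (Fin n) K) :
    (Submodule.span (MvPolynomial (Fin n) K)
      {(Ideal.Quotient.mk L f : MvPolynomial (Fin n) K ⧸ L)}).annihilator
      = L.colon (Ideal.span {f}) := by
  ext r
  rw [Submodule.mem_annihilator_span_singleton, Ideal.mem_colon_span_singleton]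
  have hsm : r • (Ideal.Quotient.mk L f) = Ideal.Quotient.mk L (r * f) := rfl
  rw [hsm]
  exact Ideal.Quotient.eq_zero_iff_mem

theorem isAssociatedPrime_of_colon {L p : Ideal (MvPolynomial (Fin n) K)}
    {f : MvPolynomial (Fin n) K} (hp : p.IsPrime) (hcolon : L.colon (Ideal.span {f}) = p) :
    IsAssociatedPrime p (MvPolynomial (Fin n) K ⧸ L) :=
  ⟨hp, Ideal.Quotient.mk L f, by rw [Submodule.bot_colon', colon_eq_annihilator, hcolon, hp.radical]⟩



theorem sum_smul_apply (a : Fin m → (Fin n →₀ ℕ)) (b : Fin m → ℕ) (jj : Fin n) :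
    (∑ t, b t • a t) jj = ∑ t, b t * a t jj := by
  rw [Finset.sum_apply']
  exact Finset.sum_congr rfl fun t _ => by rw [Finsupp.smul_apply, smul_eq_mul]

theorem dsum_add (x y : Fin n →₀ ℕ) : dsum (x + y) = dsum x + dsum y := by
  simp [dsum, Finsupp.add_apply, Finset.sum_add_distrib]

theorem dsum_smul (t : ℕ) (x : Fin n →₀ ℕ) : dsum (t • x) = t * dsum x := by
  simp [dsum, Finsupp.smul_apply, Finset.mul_sum]

theorem dsum_sum (f : Fin m → (Fin n →₀ ℕ)) : dsum (∑ i, f i) = ∑ i, dsum (f i) := by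
  simp only [dsum, Finset.sum_apply']
  rw [Finset.sum_comm]

theorem dsum_single (jj : Fin n) : dsum (Finsupp.single jj 1) = 1 := by
  rw [dsum]
  rw [Finset.sum_eq_single jj (fun t _ ht => Finsupp.single_eq_of_ne' (Ne.symm ht))
    (fun h => absurd (Finset.mem_univ jj) h)]
  exact Finsupp.single_eq_same

theorem dsum_mono {x y : Fin n →₀ ℕ} (h : x ≤ y) : dsum x ≤ dsum y :=
  Finset.sum_le_sum fun j _ => h j

/-- sum over the support equals dsum -/
theorem sum_support_eq_dsum (x : Fin n →₀ ℕ) : ∑ jj ∈ x.support, x jj = dsum x :=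
  (dsum_eq_degree x).symm


variable {K : Type} [Field K] {n m : ℕ}

section Main
variable (a : Fin m → (Fin n →₀ ℕ)) (j : Fin m → Fin n) (s : Fin m) (k : ℕ)

/-- the exponent vector of the witness polynomial -/
def wexp : Fin n →₀ ℕ :=
  (∑ i, (a i - Finsupp.single (j i) 1)) + (k - 1) • a s

variable {a} {j}

theorem apply_eq_zero_of_ne (hdisj : Pairwise fun i j => Disjoint (a i).support (a j).support)
    (hj : ∀ i, j i ∈ (a i).support) {i t : Fin m} (hit : t ≠ i) : a t (j i) = 0 := by
  by_contra h
  exact (Finset.disjoint_left.mp (hdisj hit) (Finsupp.mem_support_iff.mpr h)) (hj i)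

theorem single_apply_eq_zero_of_ne
    (hdisj : Pairwise fun i j => Disjoint (a i).support (a j).support)
    (hj : ∀ i, j i ∈ (a i).support) {i t : Fin m} (hit : i ≠ t) {jj : Fin n}
    (hjj : jj ∈ (a t).support) : (Finsupp.single (j i) 1 : Fin n →₀ ℕ) jj = 0 := by
  apply Finsupp.single_eq_of_ne
  intro heq
  exact (Finset.disjoint_left.mp (hdisj hit) (heq ▸ hj i)) hjj

theorem sum_delta_smul (a : Fin m → (Fin n →₀ ℕ)) (c : ℕ) (t : Fin m) :
    ∑ i, (if i = t then c else 0) • a i = c • a t := by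
  rw [Finset.sum_eq_single t]
  · rw [if_pos rfl]
  · intro i _ hi; rw [if_neg hi, zero_smul]
  · intro h; exact absurd (Finset.mem_univ t) h

theorem single_le_a (hj : ∀ i, j i ∈ (a i).support) (i : Fin m) :
    Finsupp.single (j i) 1 ≤ a i :=
  Finsupp.single_le_iff.mpr (Nat.one_le_iff_ne_zero.mpr (Finsupp.mem_support_iff.mp (hj i)))

theorem a_eq_sub_add (hj : ∀ i, j i ∈ (a i).support) (i : Fin m) :
    (a i - Finsupp.single (j i) 1) + Finsupp.single (j i) 1 = a i :=
  tsub_add_cancel_of_le (single_le_a hj i)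

/-- A1 : each chosen variable multiplies the witness monomial into `I^k`. -/
theorem var_mul_wexp_mem (hj : ∀ i, j i ∈ (a i).support) (hk : 1 ≤ k) (t : Fin m) :
    (X (j t) : MvPolynomial (Fin n) K) * monomial (wexp a j s k) 1
      ∈ (Ideal.span (Set.range fun i => (monomial (a i) (1 : K)))) ^ k := by
  have hX : (X (j t) : MvPolynomial (Fin n) K) = monomial (Finsupp.single (j t) 1) 1 := by
    rw [← X_pow_eq_monomial, pow_one]
  rw [hX, monomial_mul, one_mul]
  rw [monomial_mem_pow_iff a k _ (one_ne_zero)]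
  refine ⟨fun i => (if i = t then 1 else 0) + (if i = s then k - 1 else 0), ?_, ?_⟩
  · rw [Finset.sum_add_distrib]
    simp only [Finset.sum_ite_eq', Finset.mem_univ, if_pos]
    omega
  · have hsplit : ∑ i, ((if i = t then 1 else 0) + (if i = s then k - 1 else 0)) • a i
        = a t + (k - 1) • a s := by
      simp only [add_smul, Finset.sum_add_distrib, sum_delta_smul]
      rw [one_smul]
    rw [hsplit]
    have hle : a t ≤ Finsupp.single (j t) 1 + ∑ i, (a i - Finsupp.single (j i) 1) := by
      have h1 : (a t - Finsupp.single (j t) 1) ≤ ∑ i, (a i - Finsupp.single (j i) 1) :=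
        Finset.single_le_sum (f := fun i => a i - Finsupp.single (j i) 1)
          (fun i _ => zero_le) (Finset.mem_univ t)
      calc a t = Finsupp.single (j t) 1 + (a t - Finsupp.single (j t) 1) := by
                  rw [add_comm, a_eq_sub_add hj]
        _ ≤ Finsupp.single (j t) 1 + ∑ i, (a i - Finsupp.single (j i) 1) :=
                  add_le_add_right h1 _
    calc a t + (k - 1) • a s
        ≤ (Finsupp.single (j t) 1 + ∑ i, (a i - Finsupp.single (j i) 1)) + (k - 1) • a s :=
          add_le_add_left hle _
      _ = Finsupp.single (j t) 1 + wexp a j s k := by rw [wexp, add_assoc]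

/-- coordinates of `wexp` at the chosen variables -/
theorem wexp_apply (hdisj : Pairwise fun i j => Disjoint (a i).support (a j).support)
    (hj : ∀ i, j i ∈ (a i).support) (i : Fin m) :
    wexp a j s k (j i) = (a i (j i) - 1) + (k - 1) * (a s (j i)) := by
  rw [wexp, Finsupp.add_apply, Finsupp.smul_apply, smul_eq_mul, Finset.sum_apply']
  congr 1
  rw [Finset.sum_eq_single i]
  · rw [Finsupp.tsub_apply, Finsupp.single_eq_same]
  · intro t _ ht
    rw [Finsupp.tsub_apply, apply_eq_zero_of_ne hdisj hj ht, Nat.zero_sub]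
  · intro h; exact absurd (Finset.mem_univ i) h

end Main

variable {K : Type} [Field K] {n m : ℕ}
section Main2
variable {a : Fin m → (Fin n →₀ ℕ)} {j : Fin m → Fin n} (s : Fin m) (k : ℕ)

/-- A2 : anything multiplying the witness monomial into `I^k` lies in the variable prime. -/
theorem colon_le_pIdeal
    (hdisj : Pairwise fun i j => Disjoint (a i).support (a j).support)
    (hj : ∀ i, j i ∈ (a i).support) (hk : 1 ≤ k)
    (g : MvPolynomial (Fin n) K)
    (hg : g * monomial (wexp a j s k) 1
      ∈ (Ideal.span (Set.range fun i => (monomial (a i) (1 : K)))) ^ k) :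
    g ∈ pIdeal K (Finset.image j Finset.univ) := by
  by_contra hgp
  obtain ⟨c, hc, hc0⟩ := exists_term_avoiding hgp
  have hc0' : ∀ i, c (j i) = 0 := fun i =>
    hc0 (j i) (Finset.mem_image.mpr ⟨i, Finset.mem_univ i, rfl⟩)
  have hcoeff : (g * monomial (wexp a j s k) 1).coeff (c + wexp a j s k) ≠ 0 := by
    rw [coeff_mul_monomial, mul_one]
    exact Finsupp.mem_support_iff.mp hc
  rw [span_pow] at hg
  obtain ⟨e, ⟨b, hbsum, rfl⟩, hble⟩ := exists_le_of_coeff_ne_zero hg hcoeff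
  -- coordinates at the chosen variables
  have key : ∀ i, b i * a i (j i) ≤ (a i (j i) - 1) + (k - 1) * (a s (j i)) := by
    intro i
    have h1 : (∑ t, b t • a t) (j i) ≤ (c + wexp a j s k) (j i) := hble (j i)
    rw [sum_smul_apply, Finsupp.add_apply, hc0' i, zero_add,
      wexp_apply s k hdisj hj i] at h1
    rw [Finset.sum_eq_single i (fun t _ ht => by
        rw [apply_eq_zero_of_ne hdisj hj ht, mul_zero])
      (fun h => absurd (Finset.mem_univ i) h)] at h1
    exact h1
  have hbz : ∀ i, i ≠ s → b i = 0 := by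
    intro i his
    have := key i
    rw [apply_eq_zero_of_ne hdisj hj (Ne.symm his), mul_zero, add_zero] at this
    have hpos : 1 ≤ a i (j i) := Nat.one_le_iff_ne_zero.mpr (Finsupp.mem_support_iff.mp (hj i))
    by_contra hb
    have : a i (j i) ≤ b i * a i (j i) := Nat.le_mul_of_pos_left _ (Nat.pos_of_ne_zero hb)
    omega
  have hbs : b s ≤ k - 1 := by
    have := key s
    have hpos : 1 ≤ a s (j s) := Nat.one_le_iff_ne_zero.mpr (Finsupp.mem_support_iff.mp (hj s))
    have h2 : b s * a s (j s) < k * a s (j s) := by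
      have : (a s (j s) - 1) + (k - 1) * (a s (j s)) < k * a s (j s) := by
        cases' Nat.exists_eq_add_of_le hk with k' hk'
        subst hk'
        have e1 : 1 + k' - 1 = k' := by omega
        have e2 : (1 + k') * (a s (j s)) = a s (j s) + k' * (a s (j s)) := by ring
        rw [e1, e2]
        omega
      omega
    have := Nat.lt_of_mul_lt_mul_right h2
    omega
  have : ∑ i, b i ≤ k - 1 := by
    rw [Finset.sum_eq_single s (fun i _ hi => hbz i hi)
      (fun h => absurd (Finset.mem_univ s) h)]
    exact hbs
  omega

end Main2

variable {K : Type} [Field K] {n m : ℕ}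
section Main3
variable {a : Fin m → (Fin n →₀ ℕ)} {j : Fin m → Fin n} (s : Fin m) (k : ℕ)

theorem wexp_colon_eq
    (hdisj : Pairwise fun i j => Disjoint (a i).support (a j).support)
    (hj : ∀ i, j i ∈ (a i).support) (hk : 1 ≤ k) :
    (((Ideal.span (Set.range fun i => (monomial (a i) (1 : K)))) ^ k).colon
        (Ideal.span {monomial (wexp a j s k) (1 : K)}))
      = pIdeal K (Finset.image j Finset.univ) := by
  apply le_antisymm
  · intro r hr
    rw [Ideal.mem_colon_span_singleton] at hr
    exact colon_le_pIdeal s k hdisj hj hk r hr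
  · rw [pIdeal, Ideal.span_le]
    rintro x ⟨g, ⟨jj, hjj, rfl⟩, rfl⟩
    obtain ⟨t, _, rfl⟩ := Finset.mem_image.mp (Finset.mem_coe.mp hjj)
    rw [SetLike.mem_coe, Ideal.mem_colon_span_singleton]
    show (monomial (Finsupp.single (j t) 1) (1 : K)) * monomial (wexp a j s k) 1 ∈ _
    have hX : (monomial (Finsupp.single (j t) 1) (1 : K)) = X (j t) := by
      rw [← X_pow_eq_monomial, pow_one]
    rw [hX]
    exact var_mul_wexp_mem s k hj hk t

theorem dsum_wexp (hj : ∀ i, j i ∈ (a i).support) :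
    dsum (wexp a j s k) + m = (∑ i, dsum (a i)) + (k - 1) * dsum (a s) := by
  have h1 : dsum (wexp a j s k)
      = (∑ i, dsum (a i - Finsupp.single (j i) 1)) + (k - 1) * dsum (a s) := by
    rw [wexp, dsum_add, dsum_sum, dsum_smul]
  have h2 : ∀ i, dsum (a i - Finsupp.single (j i) 1) + 1 = dsum (a i) := by
    intro i
    have h := (dsum_add (a i - Finsupp.single (j i) 1) (Finsupp.single (j i) 1)).symm
    rw [a_eq_sub_add hj i, dsum_single] at h
    omega
  have h3 : (∑ i, dsum (a i - Finsupp.single (j i) 1)) + m = ∑ i, dsum (a i) := by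
    calc (∑ i, dsum (a i - Finsupp.single (j i) 1)) + m
        = ∑ i : Fin m, (dsum (a i - Finsupp.single (j i) 1) + 1) := by
          rw [Finset.sum_add_distrib]
          simp [Finset.card_univ]
      _ = ∑ i, dsum (a i) := Finset.sum_congr rfl fun i _ => h2 i
  omega

end Main3

variable {K : Type} [Field K] {n m : ℕ}
section Lower

theorem lower_bound {a : Fin m → (Fin n →₀ ℕ)} (hm : 1 ≤ m)
    (hdisj : Pairwise fun i j => Disjoint (a i).support (a j).support)
    (hne : ∀ i, a i ≠ 0) (k : ℕ) (hk : 1 ≤ k)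
    {p : Ideal (MvPolynomial (Fin n) K)} (hp : p.IsPrime)
    {f : MvPolynomial (Fin n) K} {d : ℕ} (hfh : f.IsHomogeneous d)
    (hcolon : ((Ideal.span (Set.range fun i => (monomial (a i) (1 : K)))) ^ k).colon
      (Ideal.span {f}) = p)
    (αv : ℕ) (hαv : ∀ i, αv ≤ dsum (a i)) :
    (∑ i, dsum (a i)) + (k - 1) * αv ≤ d + m := by
  classical
  haveI : Nonempty (Fin m) := ⟨⟨0, hm⟩⟩
  set Ik := (Ideal.span (Set.range fun i => (monomial (a i) (1 : K)))) ^ k with hIk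
  -- f is not in I^k
  have hfIk : f ∉ Ik := by
    intro h
    have h1 : (1 : MvPolynomial (Fin n) K) ∈ Ik.colon (Ideal.span {f}) :=
      Ideal.mem_colon_span_singleton.mpr (by rwa [one_mul])
    rw [hcolon] at h1
    exact hp.ne_top ((Ideal.eq_top_iff_one _).mpr h1)
  -- a term of f outside I^k
  have hterm : ∃ c ∈ f.support, monomial c (f.coeff c) ∉ Ik := by
    by_contra hcon
    push_neg at hcon
    exact hfIk (mem_of_terms_mem fun c hc => hcon c hc)
  obtain ⟨c₀, hc₀supp, hc₀not⟩ := hterm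
  have hc₀coeff : f.coeff c₀ ≠ 0 := Finsupp.mem_support_iff.mp hc₀supp
  -- degree of the term
  have hdeg : dsum c₀ = d := by
    rw [dsum_eq_degree, Finsupp.degree_eq_weight_one]
    exact hfh hc₀coeff
  -- I^k is contained in p
  have hIkp : Ik ≤ p := by
    intro r hr
    rw [← hcolon]
    exact Ideal.mem_colon_span_singleton.mpr (Ideal.mul_mem_right f _ hr)
  -- each generator is in p
  have hup : ∀ i, (monomial (a i) (1 : K)) ∈ p := by
    intro i
    refine hp.mem_of_pow_mem k (hIkp ?_)
    have hx : (monomial (a i) (1 : K)) ∈ Ideal.span (Set.range fun i => (monomial (a i) (1 : K))) :=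
      Ideal.subset_span ⟨i, rfl⟩
    exact Ideal.pow_mem_pow hx k
  -- choose a variable of each generator inside p
  have hvar : ∀ i, ∃ jj ∈ (a i).support, (X jj : MvPolynomial (Fin n) K) ∈ p := by
    intro i
    have h1 : (∏ jj ∈ (a i).support, (X jj : MvPolynomial (Fin n) K) ^ (a i jj)) ∈ p := by
      rw [prod_X_pow_eq_monomial]
      exact hup i
    obtain ⟨jj, hjjmem, hjp⟩ := (Ideal.IsPrime.prod_mem_iff (hp := hp)).mp h1
    exact ⟨jj, hjjmem, hp.mem_of_pow_mem _ hjp⟩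
  choose j hj hXp using hvar
  -- the colon conditions
  have hkey : ∀ i, ∃ b : Fin m → ℕ, (∑ t, b t) = k ∧
      (∑ t, b t • a t) ≤ c₀ + Finsupp.single (j i) 1 := by
    intro i
    have hXf : (X (j i) : MvPolynomial (Fin n) K) * f ∈ Ik :=
      Ideal.mem_colon_span_singleton.mp (hcolon ▸ hXp i)
    have hco : (X (j i) * f).coeff (c₀ + Finsupp.single (j i) 1) ≠ 0 := by
      have hX : (X (j i) : MvPolynomial (Fin n) K) = monomial (Finsupp.single (j i) 1) 1 := by
        rw [← X_pow_eq_monomial, pow_one]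
      rw [mul_comm, hX, coeff_mul_monomial, mul_one]
      exact hc₀coeff
    rw [hIk, span_pow] at hXf
    obtain ⟨e, ⟨b, hbsum, rfl⟩, hble⟩ := exists_le_of_coeff_ne_zero hXf hco
    exact ⟨b, hbsum, hble⟩
  choose b hbsum hble using hkey
  -- the auxiliary exponent vector
  set B : Fin m → ℕ := fun t => Finset.univ.sup (fun i => b i t - (if i = t then 1 else 0))
    with hB
  -- supports decouple
  have hzero : ∀ {t t0 : Fin m}, t ≠ t0 → ∀ {jj}, jj ∈ (a t0).support → a t jj = 0 := by
    intro t t0 htt jj hjj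
    by_contra h
    exact (Finset.disjoint_left.mp (hdisj htt) (Finsupp.mem_support_iff.mpr h)) hjj
  -- B bounds give membership-style inequality
  have hBle : (∑ t, B t • a t) ≤ c₀ := by
    intro jj
    rw [sum_smul_apply]
    by_cases hjj : ∃ t0, jj ∈ (a t0).support
    · obtain ⟨t0, ht0⟩ := hjj
      rw [Finset.sum_eq_single t0 (fun t _ htt => by rw [hzero htt ht0, mul_zero])
        (fun h => absurd (Finset.mem_univ t0) h)]
      obtain ⟨i0, _, hi0⟩ := Finset.exists_mem_eq_sup Finset.univ Finset.univ_nonempty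
        (fun i => b i t0 - (if i = t0 then 1 else 0))
      have hx : 1 ≤ a t0 jj := Nat.one_le_iff_ne_zero.mpr (Finsupp.mem_support_iff.mp ht0)
      have hble0 : b i0 t0 * a t0 jj ≤ c₀ jj + (Finsupp.single (j i0) 1) jj := by
        have h1 := hble i0 jj
        rw [sum_smul_apply, Finsupp.add_apply] at h1
        refine le_trans (le_trans ?_ h1) le_rfl
        exact Finset.single_le_sum (f := fun t => b i0 t * a t jj)
          (fun t _ => Nat.zero_le _) (Finset.mem_univ t0)
      show B t0 * a t0 jj ≤ c₀ jj
      rw [hB]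
      simp only
      rw [hi0]
      by_cases hit : i0 = t0
      · subst hit
        rw [if_pos rfl]
        have hs1 : (Finsupp.single (j i0) 1 : Fin n →₀ ℕ) jj ≤ 1 := by
          rw [Finsupp.single_apply]
          split <;> omega
        have hsub : (b i0 i0 - 1) * a i0 jj = b i0 i0 * a i0 jj - a i0 jj :=
          Nat.sub_one_mul _ _
        omega
      · rw [if_neg hit]
        have hs0 : (Finsupp.single (j i0) 1 : Fin n →₀ ℕ) jj = 0 := by
          apply Finsupp.single_eq_of_ne'
          intro heq
          exact (Finset.disjoint_left.mp (hdisj hit) (heq ▸ hj i0)) ht0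
        rw [Nat.sub_zero]
        omega
    · push_neg at hjj
      rw [Finset.sum_eq_zero (fun t _ => by
        rw [Finsupp.notMem_support_iff.mp (fun h => (hjj t) h), mul_zero])]
      exact Nat.zero_le _
  -- sum of B is at most k - 1
  have hBlt : (∑ t, B t) ≤ k - 1 := by
    by_contra hcon
    push_neg at hcon
    apply hc₀not
    rw [hIk, monomial_mem_pow_iff a k c₀ hc₀coeff]
    exact ⟨B, by omega, hBle⟩
  -- pointwise upper bound for b in terms of B
  have hBub : ∀ i t, b i t ≤ B t + (if i = t then 1 else 0) := by
    intro i t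
    have h1 : b i t - (if i = t then 1 else 0) ≤ B t :=
      Finset.le_sup (f := fun i => b i t - (if i = t then 1 else 0)) (Finset.mem_univ i)
    split <;> split at h1 <;> omega
  -- sum of B is at least k - 1
  have hBge : k - 1 ≤ ∑ t, B t := by
    have i0 : Fin m := ⟨0, hm⟩
    have h1 : (∑ t, b i0 t) ≤ ∑ t, (B t + (if i0 = t then 1 else 0)) :=
      Finset.sum_le_sum fun t _ => hBub i0 t
    rw [Finset.sum_add_distrib] at h1
    simp only [Finset.sum_ite_eq, Finset.mem_univ, if_pos] at h1
    rw [hbsum i0] at h1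
    omega
  -- diagonal entries dominate B
  have hgam : ∀ i, B i + 1 ≤ b i i := by
    intro i
    have h1 : (∑ t, b i t) = b i i + ∑ t ∈ Finset.univ.erase i, b i t :=
      (Finset.add_sum_erase _ _ (Finset.mem_univ i)).symm
    have h2 : (∑ t ∈ Finset.univ.erase i, b i t) ≤ ∑ t ∈ Finset.univ.erase i, B t := by
      refine Finset.sum_le_sum fun t ht => ?_
      have := hBub i t
      rw [if_neg (Ne.symm (Finset.ne_of_mem_erase ht))] at this
      omega
    have h3 : (∑ t, B t) = B i + ∑ t ∈ Finset.univ.erase i, B t :=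
      (Finset.add_sum_erase _ _ (Finset.mem_univ i)).symm
    have h4 := hbsum i
    omega
  -- per-generator degree estimate
  have hdeg_i : ∀ i, b i i * dsum (a i) ≤ (∑ jj ∈ (a i).support, c₀ jj) + 1 := by
    intro i
    have h1 : ∀ jj ∈ (a i).support,
        b i i * a i jj ≤ c₀ jj + (Finsupp.single (j i) 1) jj := by
      intro jj hjj
      have h2 := hble i jj
      rw [sum_smul_apply, Finsupp.add_apply] at h2
      refine le_trans (le_trans ?_ h2) le_rfl
      rw [Finset.sum_eq_single i (fun t _ htt => by rw [hzero htt hjj, mul_zero])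
        (fun h => absurd (Finset.mem_univ i) h)]
    have h3 : (∑ jj ∈ (a i).support, b i i * a i jj)
        ≤ ∑ jj ∈ (a i).support, (c₀ jj + (Finsupp.single (j i) 1) jj) :=
      Finset.sum_le_sum h1
    rw [← Finset.mul_sum, sum_support_eq_dsum, Finset.sum_add_distrib] at h3
    have h4 : (∑ jj ∈ (a i).support, (Finsupp.single (j i) 1 : Fin n →₀ ℕ) jj) ≤ 1 := by
      have h5 : (∑ jj ∈ (a i).support, (Finsupp.single (j i) 1 : Fin n →₀ ℕ) jj)
          ≤ ∑ jj, (Finsupp.single (j i) 1 : Fin n →₀ ℕ) jj :=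
        Finset.sum_le_sum_of_subset (Finset.subset_univ _)
      have h6 := dsum_single (j i)
      rw [dsum] at h6
      omega
    omega
  -- disjointness: the supports sum is at most the whole degree
  have hsupp_sum : (∑ i, ∑ jj ∈ (a i).support, c₀ jj) ≤ dsum c₀ := by
    have hdisj' : (↑(Finset.univ : Finset (Fin m)) : Set (Fin m)).PairwiseDisjoint
        (fun i => (a i).support) := fun x _ y _ hxy => hdisj hxy
    rw [← Finset.sum_biUnion hdisj']
    rw [dsum]
    exact Finset.sum_le_sum_of_subset (Finset.subset_univ _)
  -- final assembly
  have hfin : ∀ i, B i * αv + dsum (a i) ≤ (∑ jj ∈ (a i).support, c₀ jj) + 1 := by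
    intro i
    have h1 : B i * αv ≤ B i * dsum (a i) := Nat.mul_le_mul_left _ (hαv i)
    have h2 : B i * dsum (a i) + dsum (a i) = (B i + 1) * dsum (a i) := by ring
    have h3 : (B i + 1) * dsum (a i) ≤ b i i * dsum (a i) :=
      Nat.mul_le_mul_right _ (hgam i)
    have h4 := hdeg_i i
    omega
  have h5 : (∑ i, (B i * αv + dsum (a i))) ≤ ∑ i, ((∑ jj ∈ (a i).support, c₀ jj) + 1) :=
    Finset.sum_le_sum fun i _ => hfin i
  rw [Finset.sum_add_distrib, Finset.sum_add_distrib, ← Finset.sum_mul] at h5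
  simp only [Finset.sum_const, Finset.card_univ, Fintype.card_fin, smul_eq_mul, mul_one] at h5
  have h6 : (k - 1) * αv ≤ (∑ t, B t) * αv := Nat.mul_le_mul_right _ hBge
  omega

end Lower


end Stmt14Aux


/-- Corollary 5.6(c): let `u_1,…,u_m` be nonconstant monomials with
pairwise disjoint supports and `I = (u_1,…,u_m)` the monomial complete intersection they
generate (so `μ(I) = m`).  Then for every `k ≥ 1`,
`v(I^k) = α(I)·k + (∑_i deg(u_i) − α(I) − m)`, where `α(I) = min_i deg(u_i)`. -/
theorem stmt14 {K : Type} [Field K] {n m : ℕ} (hm : 1 ≤ m)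
    (a : Fin m → (Fin n →₀ ℕ)) (hne : ∀ i, a i ≠ 0)
    (hdisj : Pairwise fun i j => Disjoint (a i).support (a j).support)
    (I : Ideal (MvPolynomial (Fin n) K))
    (hI : I = Ideal.span (Set.range fun i => (monomial (a i) (1 : K)))) :
    ∀ k : ℕ, 1 ≤ k →
      (vnumber (I ^ k) : ℤ) = (alphaDeg I : ℤ) * k +
        ((∑ i, ((monomial (a i) (1 : K) : MvPolynomial (Fin n) K).totalDegree : ℤ)) -
          (alphaDeg I : ℤ) - m) := by
  intro k hk
  classical
  haveI : Nonempty (Fin m) := ⟨⟨0, hm⟩⟩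
  -- choose variables in the supports
  have hsupp : ∀ i, (a i).support.Nonempty := fun i =>
    Finsupp.support_nonempty_iff.mpr (hne i)
  set j : Fin m → Fin n := fun i => (hsupp i).choose with hjdef
  have hj : ∀ i, j i ∈ (a i).support := fun i => (hsupp i).choose_spec
  -- choose the generator of minimal degree
  obtain ⟨s, -, hs⟩ := Finset.exists_min_image Finset.univ (fun i => Stmt14Aux.dsum (a i))
    Finset.univ_nonempty
  have hs' : ∀ i, Stmt14Aux.dsum (a s) ≤ Stmt14Aux.dsum (a i) := fun i => hs i (Finset.mem_univ i)
  set αv : ℕ := Stmt14Aux.dsum (a s) with hαdef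
  -- the initial degree
  have halpha : alphaDeg I = αv := by
    have hmem : αv ∈ {d : ℕ | ∃ f ∈ I, f ≠ 0 ∧ MvPolynomial.IsHomogeneous f d} := by
      refine ⟨monomial (a s) 1, ?_, ?_, Stmt14Aux.isHomogeneous_monomial_dsum _ _⟩
      · rw [hI]; exact Ideal.subset_span ⟨s, rfl⟩
      · simp [monomial_eq_zero]
    apply le_antisymm (Nat.sInf_le hmem)
    refine le_csInf ⟨αv, hmem⟩ ?_
    rintro d ⟨f, hfI, hf0, hfhom⟩
    have hrange : (Set.range fun i => (monomial (a i) (1 : K)))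
        = (fun g => monomial g (1 : K)) '' Set.range a := by
      rw [← Set.range_comp]; rfl
    rw [hI, hrange] at hfI
    obtain ⟨c, hc⟩ := MvPolynomial.support_nonempty.mpr hf0
    have hcoeff : f.coeff c ≠ 0 := Finsupp.mem_support_iff.mp hc
    obtain ⟨g, ⟨i, rfl⟩, hle⟩ := Stmt14Aux.exists_le_of_coeff_ne_zero hfI hcoeff
    have hdc : Stmt14Aux.dsum c = d := by
      rw [Stmt14Aux.dsum_eq_degree, Finsupp.degree_eq_weight_one]
      exact hfhom hcoeff
    calc αv ≤ Stmt14Aux.dsum (a i) := hs' i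
      _ ≤ Stmt14Aux.dsum c := Stmt14Aux.dsum_mono hle
      _ = d := hdc
  -- the witness degree
  set N : ℕ := Stmt14Aux.dsum (Stmt14Aux.wexp a j s k) with hNdef
  have hN : N + m = (∑ i, Stmt14Aux.dsum (a i)) + (k - 1) * αv :=
    Stmt14Aux.dsum_wexp s k hj
  -- the v-number
  have hvn : vnumber (I ^ k) = N := by
    have hcolon : ((I ^ k).colon
        (Ideal.span {monomial (Stmt14Aux.wexp a j s k) (1 : K)}))
          = Stmt14Aux.pIdeal K (Finset.image j Finset.univ) := by
      rw [hI]; exact Stmt14Aux.wexp_colon_eq s k hdisj hj hk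
    have hprime := Stmt14Aux.pIdeal_isPrime K (Finset.image j Finset.univ)
    have hass : Stmt14Aux.pIdeal K (Finset.image j Finset.univ) ∈ assOf (I ^ k) :=
      Stmt14Aux.isAssociatedPrime_of_colon hprime hcolon
    have hmem : N ∈ {d : ℕ | ∃ p ∈ assOf (I ^ k), ∃ f : MvPolynomial (Fin n) K,
        f.IsHomogeneous d ∧ (I ^ k).colon (Ideal.span {f}) = p} :=
      ⟨_, hass, monomial (Stmt14Aux.wexp a j s k) 1,
        Stmt14Aux.isHomogeneous_monomial_dsum _ _, hcolon⟩
    apply le_antisymm (Nat.sInf_le hmem)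
    refine le_csInf ⟨N, hmem⟩ ?_
    rintro d ⟨p, hpass, f, hfhom, hfcolon⟩
    have hp : p.IsPrime := hpass.1
    have hlow := Stmt14Aux.lower_bound hm hdisj hne k hk hp hfhom
      (by rw [← hI]; exact hfcolon) αv hs'
    omega
  -- total degrees
  have htd : ∀ i, ((monomial (a i) (1 : K) : MvPolynomial (Fin n) K).totalDegree : ℤ)
      = (Stmt14Aux.dsum (a i) : ℤ) := by
    intro i
    rw [totalDegree_monomial _ (one_ne_zero), ← Stmt14Aux.dsum_eq_fsum]
  rw [hvn, halpha, Finset.sum_congr rfl (fun i _ => htd i)]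
  have hNz : (N : ℤ) + m = (∑ i, (Stmt14Aux.dsum (a i) : ℤ)) + ((k : ℤ) - 1) * αv := by
    have hc : ((∑ i, Stmt14Aux.dsum (a i) : ℕ) : ℤ) = ∑ i, (Stmt14Aux.dsum (a i) : ℤ) := by
      push_cast; ring
    have hkc : (((k - 1 : ℕ)) : ℤ) = (k : ℤ) - 1 := by omega
    have := congrArg (fun x : ℕ => (x : ℤ)) hN
    push_cast at this
    rw [hkc] at this
    push_cast
    linarith
  linear_combination hNz
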